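/- arXiv:math/0412125 — 3 statements merged into one kernel-verified Lean document; each statement's English description precedes it below -/
import Mathlib

section
/- Let f and g both be of Class III on an open set ω ⊆ ℍ with ω ∩ ℝ = ∅. Then f(p)g(p) = g(p)f(p) for all p ∈ ω, the product fg and the sum f + g are of Class III on ω, and if f(p) ≠ 0 for all p ∈ ω then the pointwise quaternionic inverse p ↦ f(p)⁻¹ is of Class III on ω. -/
open Quaternion

noncomputable section

/-- The quaternionic imaginary units. -/
def qI : ℍ[ℝ] := ⟨0, 1, 0, 0⟩
def qJ : ℍ[ℝ] := ⟨0, 0, 1, 0⟩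
def qK : ℍ[ℝ] := ⟨0, 0, 0, 1⟩

/-- `ι(p) = Im p / |Im p|`. -/
def iota (p : ℍ[ℝ]) : ℍ[ℝ] := (‖p.im‖)⁻¹ • p.im

/-- The left Fueter operator `∂f/∂_l p̄`. -/
def fueterL (f : ℍ[ℝ] → ℍ[ℝ]) (p : ℍ[ℝ]) : ℍ[ℝ] :=
  fderiv ℝ f p 1 + qI * fderiv ℝ f p qI + qJ * fderiv ℝ f p qJ + qK * fderiv ℝ f p qK

/-- The right Fueter operator `∂f/∂_r p̄`. -/
def fueterR (f : ℍ[ℝ] → ℍ[ℝ]) (p : ℍ[ℝ]) : ℍ[ℝ] :=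
  fderiv ℝ f p 1 + fderiv ℝ f p qI * qI + fderiv ℝ f p qJ * qJ + fderiv ℝ f p qK * qK

/-- Spherical parametrization of the imaginary unit sphere. -/
def sph (α β : ℝ) : ℍ[ℝ] :=
  ⟨0, Real.cos α * Real.sin β, Real.sin α * Real.sin β, Real.cos β⟩

/-- `∂ι/∂α`. -/
def sphA (α β : ℝ) : ℍ[ℝ] :=
  ⟨0, -(Real.sin α * Real.sin β), Real.cos α * Real.sin β, 0⟩

/-- `∂ι/∂β`. -/
def sphB (α β : ℝ) : ℍ[ℝ] :=
  ⟨0, Real.cos α * Real.cos β, Real.sin α * Real.cos β, -Real.sin β⟩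

/-- Complex Extrinsic on ω. -/
def IsCE (f : ℍ[ℝ] → ℍ[ℝ]) (ω : Set ℍ[ℝ]) : Prop := ∀ p ∈ ω, f p * p = p * f p

/-- Class I : C¹, CE and `∂f/∂t + ι ∂f/∂r = 0`. -/
def IsClassI (f : ℍ[ℝ] → ℍ[ℝ]) (ω : Set ℍ[ℝ]) : Prop :=
  ContDiffOn ℝ 1 f ω ∧ IsCE f ω ∧
  ∀ p ∈ ω, fderiv ℝ f p 1 + iota p * fderiv ℝ f p (iota p) = 0

/-- Class II with an explicit decomposition `f = u + ι v`. -/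
def IsClassIIWith (f : ℍ[ℝ] → ℍ[ℝ]) (u v : ℍ[ℝ] → ℝ) (ω : Set ℍ[ℝ]) : Prop :=
  ContDiffOn ℝ 1 f ω ∧
  (∀ p ∈ ω, f p = (u p : ℍ[ℝ]) + (v p : ℍ[ℝ]) * iota p) ∧
  ∀ p ∈ ω, fueterL f p = ((-2 * v p / ‖p.im‖ : ℝ) : ℍ[ℝ])

/-- (left-) Class II. -/
def IsClassII (f : ℍ[ℝ] → ℍ[ℝ]) (ω : Set ℍ[ℝ]) : Prop := ∃ u v, IsClassIIWith f u v ω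

/-- right-Class II with an explicit decomposition. -/
def IsClassIIRWith (f : ℍ[ℝ] → ℍ[ℝ]) (u v : ℍ[ℝ] → ℝ) (ω : Set ℍ[ℝ]) : Prop :=
  ContDiffOn ℝ 1 f ω ∧
  (∀ p ∈ ω, f p = (u p : ℍ[ℝ]) + (v p : ℍ[ℝ]) * iota p) ∧
  ∀ p ∈ ω, fueterR f p = ((-2 * v p / ‖p.im‖ : ℝ) : ℍ[ℝ])

/-- right-Class II. -/
def IsClassIIR (f : ℍ[ℝ] → ℍ[ℝ]) (ω : Set ℍ[ℝ]) : Prop := ∃ u v, IsClassIIRWith f u v ω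

/-- Complex Intrinsic : `u`, `v` depend only on `(t, r)`. -/
def IsCI (f : ℍ[ℝ] → ℍ[ℝ]) (ω : Set ℍ[ℝ]) : Prop :=
  ∃ ut vt : ℝ → ℝ → ℝ, ∀ p ∈ ω,
    f p = (ut p.re ‖p.im‖ : ℍ[ℝ]) + (vt p.re ‖p.im‖ : ℍ[ℝ]) * iota p

/-- Class III : Class I and CI. -/
def IsClassIII (f : ℍ[ℝ] → ℍ[ℝ]) (ω : Set ℍ[ℝ]) : Prop := IsClassI f ω ∧ IsCI f ω



lemma iota_sq {p : ℍ[ℝ]} (h : p.im ≠ 0) : iota p * iota p = -1 := by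
  have hr : ‖p.im‖ ≠ 0 := norm_ne_zero_iff.2 h
  have hx : p.im * p.im = -((normSq p.im : ℝ) : ℍ[ℝ]) := by
    have := Quaternion.self_mul_star (a := p.im)
    rw [Quaternion.star_im] at this
    linear_combination (norm := noncomm_ring) -this
  unfold iota
  rw [smul_mul_smul_comm, hx, Quaternion.normSq_eq_norm_mul_self, smul_neg,
    Quaternion.smul_coe]
  norm_num
  norm_cast
  field_simp
  exact Quaternion.coe_one

lemma coe_eq_smul' (r : ℝ) : (r : ℍ[ℝ]) = r • (1 : ℍ[ℝ]) := by
  rw [← Quaternion.coe_mul_eq_smul, mul_one]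

lemma lin_mul (u1 v1 u2 v2 : ℝ) {x : ℍ[ℝ]} (hx : x * x = -1) :
    ((u1 : ℍ[ℝ]) + (v1 : ℍ[ℝ]) * x) * ((u2 : ℍ[ℝ]) + (v2 : ℍ[ℝ]) * x)
      = ((u1 * u2 - v1 * v2 : ℝ) : ℍ[ℝ]) + ((u1 * v2 + v1 * u2 : ℝ) : ℍ[ℝ]) * x := by
  simp only [coe_eq_smul', add_mul, mul_add, smul_mul_assoc, mul_smul_comm, one_mul, mul_one, hx]
  module

lemma commute_iota (u v : ℝ) (x : ℍ[ℝ]) : Commute x ((u : ℍ[ℝ]) + (v : ℍ[ℝ]) * x) :=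
  ((Quaternion.coe_commute u x).symm).add_right
    (((Quaternion.coe_commute v x).symm).mul_right (Commute.refl x))

lemma commute_lin (u1 v1 u2 v2 : ℝ) (x : ℍ[ℝ]) :
    Commute ((u1 : ℍ[ℝ]) + (v1 : ℍ[ℝ]) * x) ((u2 : ℍ[ℝ]) + (v2 : ℍ[ℝ]) * x) :=
  (Quaternion.coe_commute u1 _).add_left
    ((Quaternion.coe_commute v1 _).mul_left (commute_iota u2 v2 x))

lemma lin_inv (u v : ℝ) {x : ℍ[ℝ]} (hx : x * x = -1) (hd : u^2 + v^2 ≠ 0) :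
    ((u : ℍ[ℝ]) + (v : ℍ[ℝ]) * x)⁻¹
      = ((u / (u^2+v^2) : ℝ) : ℍ[ℝ]) + ((-v / (u^2+v^2) : ℝ) : ℍ[ℝ]) * x := by
  symm
  apply eq_inv_of_mul_eq_one_left
  rw [lin_mul _ _ _ _ hx]
  have h1 : u / (u^2+v^2) * u - -v / (u^2+v^2) * v = 1 := by field_simp; ring
  have h2 : u / (u^2+v^2) * v + -v / (u^2+v^2) * u = 0 := by field_simp; ring
  rw [h1, h2]
  simp

lemma lin_ne_zero {u v : ℝ} {x : ℍ[ℝ]} (_hx : x.re = 0) (_hxne : x ≠ 0)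
    (h : (u : ℍ[ℝ]) + (v : ℍ[ℝ]) * x ≠ 0) : u^2 + v^2 ≠ 0 := by
  intro hd
  have hu : u = 0 := by nlinarith [sq_nonneg u, sq_nonneg v]
  have hv : v = 0 := by nlinarith [sq_nonneg u, sq_nonneg v]
  apply h
  simp [hu, hv]

/-- Class III functions commute and are closed under product, sum
and pointwise inverse. -/
theorem stmt5 (ω : Set ℍ[ℝ]) (hω : IsOpen ω) (hIm : ∀ p ∈ ω, p.im ≠ 0)
    (f g : ℍ[ℝ] → ℍ[ℝ]) (hf : IsClassIII f ω) (hg : IsClassIII g ω) :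
    (∀ p ∈ ω, f p * g p = g p * f p) ∧
    IsClassIII (fun p => f p * g p) ω ∧
    IsClassIII (fun p => f p + g p) ω ∧
    ((∀ p ∈ ω, f p ≠ 0) → IsClassIII (fun p => (f p)⁻¹) ω) := by
  -- basic setup
  obtain ⟨⟨hfc, hfCE, hfP⟩, uf, vf, hfd⟩ := hf
  obtain ⟨⟨hgc, hgCE, hgP⟩, ug, vg, hgd⟩ := hg
  have hsq : ∀ p ∈ ω, iota p * iota p = -1 := fun p hp => iota_sq (hIm p hp)
  have hcomm : ∀ p ∈ ω, f p * g p = g p * f p := by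
    intro p hp
    rw [hfd p hp, hgd p hp]
    exact commute_lin _ _ _ _ _
  have hfι : ∀ p ∈ ω, iota p * f p = f p * iota p := by
    intro p hp
    rw [hfd p hp]
    exact commute_iota _ _ _
  have hgι : ∀ p ∈ ω, iota p * g p = g p * iota p := by
    intro p hp
    rw [hgd p hp]
    exact commute_iota _ _ _
  have hfD : ∀ p ∈ ω, HasFDerivAt f (fderiv ℝ f p) p := by
    intro p hp
    exact ((hfc.contDiffAt (hω.mem_nhds hp)).differentiableAt one_ne_zero).hasFDerivAt
  have hgD : ∀ p ∈ ω, HasFDerivAt g (fderiv ℝ g p) p := by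
    intro p hp
    exact ((hgc.contDiffAt (hω.mem_nhds hp)).differentiableAt one_ne_zero).hasFDerivAt
  refine ⟨hcomm, ⟨⟨?_, ?_, ?_⟩, ?_⟩, ⟨⟨?_, ?_, ?_⟩, ?_⟩, ?_⟩
  · exact hfc.mul hgc
  · intro p hp
    calc f p * g p * p = f p * (g p * p) := by rw [mul_assoc]
      _ = f p * p * g p := by rw [hgCE p hp, mul_assoc]
      _ = p * (f p * g p) := by rw [hfCE p hp, mul_assoc]
  · intro p hp
    set A := fderiv ℝ f p with hA
    set B := fderiv ℝ g p with hB
    have hder : fderiv ℝ (fun q => f q * g q) p = f p • B + A.smulRight (g p) :=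
      ((hfD p hp).mul' (hgD p hp)).fderiv
    rw [hder]
    simp only [ContinuousLinearMap.add_apply, ContinuousLinearMap.smul_apply,
      ContinuousLinearMap.smulRight_apply, smul_eq_mul]
    have h1 : iota p * (f p * B (iota p) + A (iota p) * g p)
        = f p * (iota p * B (iota p)) + (iota p * A (iota p)) * g p := by
      rw [mul_add, ← mul_assoc, hfι p hp, mul_assoc, ← mul_assoc, ← mul_assoc]
    rw [h1]
    have key : (A 1 + iota p * A (iota p)) * g p + f p * (B 1 + iota p * B (iota p)) = 0 := by
      rw [hfP p hp, hgP p hp, zero_mul, mul_zero, zero_add]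
    linear_combination (norm := noncomm_ring) key
  · exact ⟨fun t r => uf t r * ug t r - vf t r * vg t r,
      fun t r => uf t r * vg t r + vf t r * ug t r, fun p hp => by
        beta_reduce
        rw [hfd p hp, hgd p hp, lin_mul _ _ _ _ (hsq p hp)]⟩
  · exact hfc.add hgc
  · intro p hp
    simp only [add_mul, mul_add, hfCE p hp, hgCE p hp]
  · intro p hp
    have hder : fderiv ℝ (fun q => f q + g q) p = fderiv ℝ f p + fderiv ℝ g p :=
      ((hfD p hp).add (hgD p hp)).fderiv
    rw [hder]
    simp only [ContinuousLinearMap.add_apply]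
    have := hfP p hp
    have := hgP p hp
    rw [mul_add]
    linear_combination (norm := noncomm_ring) hfP p hp + hgP p hp
  · exact ⟨fun t r => uf t r + ug t r, fun t r => vf t r + vg t r, fun p hp => by
      beta_reduce
      rw [hfd p hp, hgd p hp]
      push_cast
      noncomm_ring⟩
  · intro hne
    have hinv : (fun q => (f q)⁻¹) = Ring.inverse ∘ f := by
      funext q
      simp [Function.comp, Ring.inverse_eq_inv]
    have hU : ∀ p ∈ ω, IsUnit (f p) := fun p hp => (hne p hp).isUnit
    refine ⟨⟨?_, ?_, ?_⟩, ?_⟩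
    · intro p hp
      rw [hinv]
      exact ((contDiffAt_ringInverse ℝ ((hU p hp).unit)).comp p
        (hfc.contDiffAt (hω.mem_nhds hp))).contDiffWithinAt
    · intro p hp
      have : Commute (f p) p := hfCE p hp
      exact this.inv_left₀
    · intro p hp
      set A := fderiv ℝ f p with hA
      set c := (f p)⁻¹ with hc
      have hcι : iota p * c = c * iota p := by
        have : Commute (iota p) (f p) := hfι p hp
        exact this.inv_right₀
      have h1 : HasFDerivAt Ring.inverse
          (-ContinuousLinearMap.mulLeftRight ℝ ℍ[ℝ] ↑((hU p hp).unit)⁻¹ ↑((hU p hp).unit)⁻¹)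
          (f p) := by
        have := hasFDerivAt_ringInverse (𝕜 := ℝ) ((hU p hp).unit)
        rwa [IsUnit.unit_spec] at this
      have hder : fderiv ℝ (fun q => (f q)⁻¹) p
          = (-ContinuousLinearMap.mulLeftRight ℝ ℍ[ℝ] ↑((hU p hp).unit)⁻¹
              ↑((hU p hp).unit)⁻¹).comp A := by
        rw [hinv]
        exact (h1.comp p (hfD p hp)).fderiv
      have hval : ((((hU p hp).unit)⁻¹ : ℍ[ℝ]ˣ) : ℍ[ℝ]) = c := by
        rw [hc, Units.val_inv_eq_inv_val, (hU p hp).unit_spec]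
      rw [hder]
      simp only [ContinuousLinearMap.comp_apply, ContinuousLinearMap.neg_apply,
        ContinuousLinearMap.mulLeftRight_apply, hval]
      have key : c * A 1 * c + c * iota p * A (iota p) * c = 0 := by
        have h2 : c * A 1 * c + c * iota p * A (iota p) * c
            = c * (A 1 + iota p * A (iota p)) * c := by noncomm_ring
        rw [h2, hfP p hp, mul_zero, zero_mul]
      linear_combination (norm := noncomm_ring) -key - hcι * (A (iota p) * c)
    · refine ⟨fun t r => uf t r / ((uf t r)^2 + (vf t r)^2),
        fun t r => -vf t r / ((uf t r)^2 + (vf t r)^2), fun p hp => ?_⟩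
      have hne' : (uf p.re ‖p.im‖ : ℍ[ℝ]) + (vf p.re ‖p.im‖ : ℍ[ℝ]) * iota p ≠ 0 := by
        rw [← hfd p hp]; exact hne p hp
      have hιre : (iota p).re = 0 := by simp [iota]
      have hιne : iota p ≠ 0 := by
        intro h0
        have := hsq p hp
        rw [h0, mul_zero] at this
        norm_num at this
      beta_reduce
      rw [hfd p hp, lin_inv _ _ (hsq p hp) (lin_ne_zero hιre hιne hne')]


end
end

section
/- Every function of Class II on an open set ω ⊆ ℍ with ω ∩ ℝ = ∅ is of Class I on ω. -/
open Quaternion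

noncomputable section

section AuxiliaryLemmas

lemma norm_im_sq (q : ℍ[ℝ]) : ‖q.im‖^2 = q.imI^2 + q.imJ^2 + q.imK^2 := by
  rw [sq, ← Quaternion.normSq_eq_norm_mul_self, Quaternion.normSq_def']
  simp [sq]

lemma iota_re (q : ℍ[ℝ]) : (iota q).re = 0 := by simp [iota]

lemma im_mul_self (q : ℍ[ℝ]) : q.im * q.im = (-(‖q.im‖^2)) • (1 : ℍ[ℝ]) := by
  rw [norm_im_sq]
  ext <;> simp [Quaternion.re_mul, Quaternion.imI_mul, Quaternion.imJ_mul, Quaternion.imK_mul] <;> ring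

lemma iota_mul_self {q : ℍ[ℝ]} (h : q.im ≠ 0) : iota q * iota q = -1 := by
  have h1 : ‖q.im‖ ≠ 0 := norm_ne_zero_iff.mpr h
  rw [iota, smul_mul_assoc, mul_smul_comm, im_mul_self, smul_smul, smul_smul]
  ext <;> simp [sq] <;> field_simp

lemma re_of_dec (u v : ℝ) (q : ℍ[ℝ]) : ((u:ℍ[ℝ]) + (v:ℍ[ℝ]) * iota q).re = u := by
  simp [Quaternion.coe_mul_eq_smul, iota_re]

lemma vre_of_dec (u v : ℝ) (q : ℍ[ℝ]) (h : q.im ≠ 0) :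
    -((((u:ℍ[ℝ]) + (v:ℍ[ℝ]) * iota q)) * iota q).re = v := by
  rw [add_mul, mul_assoc, iota_mul_self h]
  simp [Quaternion.coe_mul_eq_smul, iota_re]

def reCLM : ℍ[ℝ] →L[ℝ] ℝ := LinearMap.toContinuousLinearMap (QuaternionAlgebra.reₗ _ _ _)

def coeCLM : ℝ →L[ℝ] ℍ[ℝ] := LinearMap.toContinuousLinearMap (Algebra.linearMap ℝ ℍ[ℝ])

lemma im_mul_comm (p : ℍ[ℝ]) : p.im * p = p * p.im := by
  ext <;> simp [Quaternion.re_mul, Quaternion.imI_mul, Quaternion.imJ_mul, Quaternion.imK_mul] <;> ring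

lemma iota_mul_comm (p : ℍ[ℝ]) : iota p * p = p * iota p := by
  rw [iota, smul_mul_assoc, mul_smul_comm, im_mul_comm]

lemma ce_of_dec (u v : ℝ) (p : ℍ[ℝ]) :
    ((u:ℍ[ℝ]) + (v:ℍ[ℝ]) * iota p) * p = p * ((u:ℍ[ℝ]) + (v:ℍ[ℝ]) * iota p) := by
  rw [add_mul, mul_add, Quaternion.coe_commutes, mul_assoc, iota_mul_comm, ← mul_assoc,
    Quaternion.coe_commutes, mul_assoc]

lemma qI_im : qI.im = qI := by ext <;> rfl
lemma qJ_im : qJ.im = qJ := by ext <;> rfl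
lemma qK_im : qK.im = qK := by ext <;> rfl
lemma qI_re : qI.re = 0 := rfl
lemma qI_imI : qI.imI = 1 := rfl
lemma qI_imJ : qI.imJ = 0 := rfl
lemma qI_imK : qI.imK = 0 := rfl
lemma qJ_re : qJ.re = 0 := rfl
lemma qJ_imI : qJ.imI = 0 := rfl
lemma qJ_imJ : qJ.imJ = 1 := rfl
lemma qJ_imK : qJ.imK = 0 := rfl
lemma qK_re : qK.re = 0 := rfl
lemma qK_imI : qK.imI = 0 := rfl
lemma qK_imJ : qK.imJ = 0 := rfl
lemma qK_imK : qK.imK = 1 := rfl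

lemma im_decomp (p : ℍ[ℝ]) : p.im = p.imI • qI + p.imJ • qJ + p.imK • qK := by
  ext <;> simp [qI_re, qI_imI, qI_imJ, qI_imK, qJ_re, qJ_imI, qJ_imJ, qJ_imK, qK_re, qK_imI, qK_imJ, qK_imK]

lemma key {f : ℍ[ℝ] → ℍ[ℝ]} {u v : ℍ[ℝ] → ℝ} {ω : Set ℍ[ℝ]} (hω : IsOpen ω)
    (hIm : ∀ p ∈ ω, p.im ≠ 0) (hC1 : ContDiffOn ℝ 1 f ω)
    (hdec : ∀ p ∈ ω, f p = (u p : ℍ[ℝ]) + (v p : ℍ[ℝ]) * iota p)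
    {p : ℍ[ℝ]} (hp : p ∈ ω) (w : ℍ[ℝ]) :
    ∃ a b : ℝ, fderiv ℝ f p w = (a : ℍ[ℝ]) + (b : ℍ[ℝ]) * iota p
      + v p • ((‖p.im‖)⁻¹ • w.im
        + (-((p.imI*w.imI + p.imJ*w.imJ + p.imK*w.imK) / ‖p.im‖) / ‖p.im‖^2) • p.im) := by
  have him : p.im ≠ 0 := hIm p hp
  have hr : ‖p.im‖ ≠ 0 := norm_ne_zero_iff.mpr him
  set r : ℝ := ‖p.im‖ with hrdef
  set α : ℝ := p.imI*w.imI + p.imJ*w.imJ + p.imK*w.imK with hα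
  -- differentiability of f at p
  have hf' : DifferentiableAt ℝ f p := (hC1.contDiffAt (hω.mem_nhds hp)).differentiableAt one_ne_zero
  have hD : HasFDerivAt f (fderiv ℝ f p) p := hf'.hasFDerivAt
  have h00 : p + (0:ℝ) • w = p := by simp
  have hline : HasDerivAt (fun s : ℝ => p + s • w) w 0 := by
    simpa using ((hasDerivAt_id (0:ℝ)).smul_const w).const_add p
  have hg : HasDerivAt (fun s : ℝ => f (p + s • w)) (fderiv ℝ f p w) 0 := by
    have hD' : HasFDerivAt f (fderiv ℝ f p) (p + (0:ℝ) • w) := by rw [h00]; exact hD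
    exact hD'.comp_hasDerivAt (0:ℝ) hline
  -- the squared norm along the line
  set Q : ℝ → ℝ := fun s => (p.imI + s*w.imI)^2 + (p.imJ + s*w.imJ)^2 + (p.imK + s*w.imK)^2
    with hQdef
  have hQval : ∀ s : ℝ, ‖(p + s • w).im‖ = Real.sqrt (Q s) := by
    intro s
    rw [← Real.sqrt_sq (norm_nonneg (p + s • w).im), norm_im_sq]
    simp [hQdef, smul_eq_mul]
  have hQ0 : Q 0 = r^2 := by
    rw [hrdef, norm_im_sq]; simp [hQdef]
  have hQ0' : Q 0 ≠ 0 := by rw [hQ0]; positivity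
  have h1 : HasDerivAt (fun s:ℝ => p.imI + s*w.imI) w.imI 0 := by
    simpa using ((hasDerivAt_id (0:ℝ)).mul_const w.imI).const_add p.imI
  have h2 : HasDerivAt (fun s:ℝ => p.imJ + s*w.imJ) w.imJ 0 := by
    simpa using ((hasDerivAt_id (0:ℝ)).mul_const w.imJ).const_add p.imJ
  have h3 : HasDerivAt (fun s:ℝ => p.imK + s*w.imK) w.imK 0 := by
    simpa using ((hasDerivAt_id (0:ℝ)).mul_const w.imK).const_add p.imK
  have hQ : HasDerivAt Q (2*α) 0 := by
    have := ((h1.pow 2).add (h2.pow 2)).add (h3.pow 2)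
    refine this.congr_deriv ?_
    simp [hα]; ring
  set N : ℝ → ℝ := fun s => Real.sqrt (Q s) with hNdef
  have hN0 : N 0 = r := by rw [hNdef]; simp only; rw [hQ0, Real.sqrt_sq (norm_nonneg _)]
  have hN : HasDerivAt N (α / r) 0 := by
    have := (Real.hasDerivAt_sqrt hQ0').comp (0:ℝ) hQ
    refine this.congr_deriv ?_
    rw [hQ0, Real.sqrt_sq (norm_nonneg _)]
    field_simp; ring
  have hN0' : N 0 ≠ 0 := by rw [hN0]; exact hr
  -- the iota curve
  set Ic : ℝ → ℍ[ℝ] := fun s => iota (p + s • w) with hIcdef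
  have hIceq : Ic = fun s => (N s)⁻¹ • (p.im + s • w.im) := by
    funext s
    rw [hIcdef]; simp only [iota, hQval s]
    congr 1
    ext <;> simp
  set K : ℍ[ℝ] := r⁻¹ • w.im + (-(α / r) / r^2) • p.im with hKdef
  have hIc : HasDerivAt Ic K 0 := by
    rw [hIceq]
    have hvec : HasDerivAt (fun s : ℝ => p.im + s • w.im) w.im 0 := by
      simpa using ((hasDerivAt_id (0:ℝ)).smul_const w.im).const_add p.im
    have := (hN.inv hN0').smul hvec
    refine this.congr_deriv ?_
    rw [hKdef, hN0]
    simp [hN0]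
  -- the U, V curves
  set g : ℝ → ℍ[ℝ] := fun s => f (p + s • w) with hgdef
  set U : ℝ → ℝ := fun s => (g s).re with hUdef
  set V : ℝ → ℝ := fun s => -((g s) * Ic s).re with hVdef
  have hU : HasDerivAt U (reCLM ((fderiv ℝ f p) w)) 0 :=
    reCLM.hasFDerivAt.comp_hasDerivAt 0 hg
  have hprod : HasDerivAt (fun s => g s * Ic s) ((fderiv ℝ f p) w * Ic 0 + g 0 * K) 0 :=
    hg.mul hIc
  have hV : HasDerivAt V (-(reCLM ((fderiv ℝ f p) w * Ic 0 + g 0 * K))) 0 :=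
    (reCLM.hasFDerivAt.comp_hasDerivAt 0 hprod).neg
  set a : ℝ := reCLM ((fderiv ℝ f p) w) with hadef
  set b : ℝ := -(reCLM ((fderiv ℝ f p) w * Ic 0 + g 0 * K)) with hbdef
  have hUc : HasDerivAt (fun s => ((U s : ℝ) : ℍ[ℝ])) ((a : ℍ[ℝ])) 0 :=
    coeCLM.hasFDerivAt.comp_hasDerivAt 0 hU
  have hVc : HasDerivAt (fun s => ((V s : ℝ) : ℍ[ℝ])) ((b : ℍ[ℝ])) 0 :=
    coeCLM.hasFDerivAt.comp_hasDerivAt 0 hV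
  have hh : HasDerivAt (fun s => ((U s : ℝ):ℍ[ℝ]) + ((V s:ℝ):ℍ[ℝ]) * Ic s)
      ((a:ℍ[ℝ]) + ((b:ℍ[ℝ]) * Ic 0 + ((V 0 : ℝ):ℍ[ℝ]) * K)) 0 := hUc.add (hVc.mul hIc)
  have hmem : ∀ᶠ s : ℝ in nhds 0, p + s • w ∈ ω := by
    have hcont : ContinuousAt (fun s : ℝ => p + s • w) 0 := hline.continuousAt
    have h2 := hcont.preimage_mem_nhds (hω.mem_nhds (by rw [h00]; exact hp))
    exact h2
  have heq : (fun s : ℝ => f (p + s • w)) =ᶠ[nhds 0]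
      (fun s => ((U s : ℝ):ℍ[ℝ]) + ((V s:ℝ):ℍ[ℝ]) * Ic s) := by
    filter_upwards [hmem] with s hs
    have hUs : U s = u (p + s • w) := by
      rw [hUdef]; simp only [hgdef]; rw [hdec _ hs, re_of_dec]
    have hVs : V s = v (p + s • w) := by
      rw [hVdef]; simp only [hgdef, hIcdef]
      rw [hdec _ hs, vre_of_dec _ _ _ (hIm _ hs)]
    simp only [hUs, hVs, hIcdef]
    exact hdec _ hs
  have hg2 : HasDerivAt (fun s : ℝ => f (p + s • w))
      ((a:ℍ[ℝ]) + ((b:ℍ[ℝ]) * Ic 0 + ((V 0 : ℝ):ℍ[ℝ]) * K)) 0 :=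
    hh.congr_of_eventuallyEq heq
  have huniq : (a:ℍ[ℝ]) + ((b:ℍ[ℝ]) * Ic 0 + ((V 0 : ℝ):ℍ[ℝ]) * K) = (fderiv ℝ f p) w :=
    hg2.unique hg
  have hIc0 : Ic 0 = iota p := by rw [hIcdef]; simp only; rw [h00]
  have hV0 : V 0 = v p := by
    rw [hVdef]; simp only [hgdef, hIcdef]
    rw [h00, hdec _ hp, vre_of_dec _ _ _ him]
  refine ⟨a, b, ?_⟩
  rw [← huniq, hIc0, hV0]
  simp only [Quaternion.coe_mul_eq_smul, ← add_assoc]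

end AuxiliaryLemmas


set_option maxHeartbeats 2000000 in
/-- Class II ⊆ Class I. -/
theorem stmt6 (ω : Set ℍ[ℝ]) (hω : IsOpen ω) (hIm : ∀ p ∈ ω, p.im ≠ 0)
    (f : ℍ[ℝ] → ℍ[ℝ]) (hf : IsClassII f ω) :
    IsClassI f ω := by
  obtain ⟨u, v, hC1, hdec, hfu⟩ := hf
  refine ⟨hC1, fun p hp => by rw [hdec p hp]; exact ce_of_dec _ _ _, fun p hp => ?_⟩
  have him : p.im ≠ 0 := hIm p hp
  have hr : ‖p.im‖ ≠ 0 := norm_ne_zero_iff.mpr him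
  obtain ⟨a0, b0, h0⟩ := key hω hIm hC1 hdec hp 1
  obtain ⟨a1, b1, h1⟩ := key hω hIm hC1 hdec hp qI
  obtain ⟨a2, b2, h2⟩ := key hω hIm hC1 hdec hp qJ
  obtain ⟨a3, b3, h3⟩ := key hω hIm hC1 hdec hp qK
  simp only [Quaternion.im_one, qI_im, qJ_im, qK_im] at h0 h1 h2 h3
  have hfue := hfu p hp
  rw [fueterL] at hfue
  have hDiota : fderiv ℝ f p (iota p)
      = (‖p.im‖⁻¹ * p.imI) • fderiv ℝ f p qI + (‖p.im‖⁻¹ * p.imJ) • fderiv ℝ f p qJ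
        + (‖p.im‖⁻¹ * p.imK) • fderiv ℝ f p qK := by
    have hiota2 : iota p = (‖p.im‖⁻¹ * p.imI) • qI + (‖p.im‖⁻¹ * p.imJ) • qJ
        + (‖p.im‖⁻¹ * p.imK) • qK := by
      ext <;> simp [iota, qI_re, qI_imI, qI_imJ, qI_imK, qJ_re, qJ_imI, qJ_imJ, qJ_imK, qK_re, qK_imI, qK_imJ, qK_imK]
    rw [hiota2, map_add, map_add, map_smul, map_smul, map_smul]
  have hr2 : p.imI^2 + p.imJ^2 + p.imK^2 = ‖p.im‖^2 := (norm_im_sq p).symm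
  rw [h0, h1, h2, h3] at hfue
  have e0 := congrArg QuaternionAlgebra.re hfue
  have e1 := congrArg QuaternionAlgebra.imI hfue
  have e2 := congrArg QuaternionAlgebra.imJ hfue
  have e3 := congrArg QuaternionAlgebra.imK hfue
  simp only [Quaternion.re_add, Quaternion.imI_add, Quaternion.imJ_add, Quaternion.imK_add,
    Quaternion.re_mul, Quaternion.imI_mul, Quaternion.imJ_mul, Quaternion.imK_mul,
    Quaternion.re_smul, Quaternion.imI_smul, Quaternion.imJ_smul, Quaternion.imK_smul,
    Quaternion.re_sub, Quaternion.imI_sub, Quaternion.imJ_sub, Quaternion.imK_sub,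
    Quaternion.re_coe, Quaternion.imI_coe, Quaternion.imJ_coe, Quaternion.imK_coe,
    Quaternion.re_one, Quaternion.imI_one, Quaternion.imJ_one, Quaternion.imK_one,
    Quaternion.re_im, Quaternion.imI_im, Quaternion.imJ_im, Quaternion.imK_im,
    Quaternion.im_one, iota, qI_re, qI_imI, qI_imJ, qI_imK, qJ_re, qJ_imI, qJ_imJ, qJ_imK, qK_re, qK_imI, qK_imJ, qK_imK, smul_eq_mul, mul_zero, zero_mul, mul_one, one_mul,
    add_zero, zero_add, sub_zero, zero_sub, neg_zero, smul_zero, Quaternion.im_zero] at e0 e1 e2 e3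
  field_simp at e0 e1 e2 e3
  -- clean forms of the Fueter-component equations
  have E0 : a0 * ‖p.im‖ = b1*p.imI + b2*p.imJ + b3*p.imK :=
    mul_left_cancel₀ (pow_ne_zero 4 hr)
      (show ‖p.im‖^4 * (a0 * ‖p.im‖) = ‖p.im‖^4 * (b1*p.imI + b2*p.imJ + b3*p.imK) by
        linear_combination ‖p.im‖^2 * e0 - v p * ‖p.im‖^2 * hr2)
  have E1 : b0*p.imI + a1*‖p.im‖ + b2*p.imK - b3*p.imJ = 0 :=
    mul_left_cancel₀ (pow_ne_zero 8 hr)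
      (show ‖p.im‖^8 * (b0*p.imI + a1*‖p.im‖ + b2*p.imK - b3*p.imJ) = ‖p.im‖^8 * 0 by
        linear_combination ‖p.im‖^6 * e1)
  have E2 : b0*p.imJ + a2*‖p.im‖ + b3*p.imI - b1*p.imK = 0 :=
    mul_left_cancel₀ (pow_ne_zero 8 hr)
      (show ‖p.im‖^8 * (b0*p.imJ + a2*‖p.im‖ + b3*p.imI - b1*p.imK) = ‖p.im‖^8 * 0 by
        linear_combination ‖p.im‖^6 * e2)
  have E3 : b0*p.imK + a3*‖p.im‖ + b1*p.imJ - b2*p.imI = 0 :=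
    mul_left_cancel₀ (pow_ne_zero 8 hr)
      (show ‖p.im‖^8 * (b0*p.imK + a3*‖p.im‖ + b1*p.imJ - b2*p.imI) = ‖p.im‖^8 * 0 by
        linear_combination ‖p.im‖^6 * e3)
  have F1 : b0*‖p.im‖ + (p.imI*a1 + p.imJ*a2 + p.imK*a3) = 0 :=
    mul_left_cancel₀ hr
      (show ‖p.im‖ * (b0*‖p.im‖ + (p.imI*a1 + p.imJ*a2 + p.imK*a3)) = ‖p.im‖ * 0 by
        linear_combination p.imI*E1 + p.imJ*E2 + p.imK*E3 - b0*hr2)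
  have ha : a0 = (p.imI*b1 + p.imJ*b2 + p.imK*b3)/‖p.im‖ := by
    field_simp
    linear_combination E0
  have hb : b0 = -((p.imI*a1 + p.imJ*a2 + p.imK*a3)/‖p.im‖) := by
    field_simp
    linear_combination F1
  -- clean form of the radial derivative
  have h0' : fderiv ℝ f p 1 = ↑a0 + ↑b0 * iota p := by
    rw [h0]; simp
  have hDi : fderiv ℝ f p (iota p)
      = ↑((p.imI*a1 + p.imJ*a2 + p.imK*a3)/‖p.im‖)
        + ↑((p.imI*b1 + p.imJ*b2 + p.imK*b3)/‖p.im‖) * iota p := by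
    rw [hDiota, h1, h2, h3]
    ext <;>
      simp only [Quaternion.re_add, Quaternion.imI_add, Quaternion.imJ_add, Quaternion.imK_add,
        Quaternion.re_mul, Quaternion.imI_mul, Quaternion.imJ_mul, Quaternion.imK_mul,
        Quaternion.re_smul, Quaternion.imI_smul, Quaternion.imJ_smul, Quaternion.imK_smul,
        Quaternion.re_coe, Quaternion.imI_coe, Quaternion.imJ_coe, Quaternion.imK_coe,
        Quaternion.re_im, Quaternion.imI_im, Quaternion.imJ_im, Quaternion.imK_im,
        iota, qI_re, qI_imI, qI_imJ, qI_imK, qJ_re, qJ_imI, qJ_imJ, qJ_imK, qK_re, qK_imI, qK_imJ, qK_imK, smul_eq_mul, mul_zero, zero_mul, mul_one, one_mul,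
        add_zero, zero_add, sub_zero, zero_sub, neg_zero] <;>
      field_simp <;>
      first
        | ring1
        | linear_combination (-(p.imI * v p)) * hr2
        | linear_combination (-(p.imJ * v p)) * hr2
        | linear_combination (-(p.imK * v p)) * hr2
  rw [h0', hDi, ha, hb]
  ext <;>
    simp only [Quaternion.re_add, Quaternion.imI_add, Quaternion.imJ_add, Quaternion.imK_add,
      Quaternion.re_mul, Quaternion.imI_mul, Quaternion.imJ_mul, Quaternion.imK_mul,
      Quaternion.re_smul, Quaternion.imI_smul, Quaternion.imJ_smul, Quaternion.imK_smul,
      Quaternion.re_coe, Quaternion.imI_coe, Quaternion.imJ_coe, Quaternion.imK_coe,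
      Quaternion.re_im, Quaternion.imI_im, Quaternion.imJ_im, Quaternion.imK_im,
      Quaternion.re_zero, Quaternion.imI_zero, Quaternion.imJ_zero, Quaternion.imK_zero,
      iota, smul_eq_mul, mul_zero, zero_mul, mul_one, one_mul,
      add_zero, zero_add, sub_zero, zero_sub, neg_zero] <;>
    field_simp <;>
    first
      | ring1
      | linear_combination (-((p.imI*b1 + p.imJ*b2 + p.imK*b3))) * hr2
      | linear_combination (-((p.imI*a1 + p.imJ*a2 + p.imK*a3))) * hr2

end
end

section
/- Let Ω̃ be an open subset of the upper half plane {x + iy ∈ ℂ : y > 0}, let ũ, ṽ : Ω̃ → ℝ be C¹, and define the CI quaternionic function f(p) = ũ(t, r(p)) + ι(p)·ṽ(t, r(p)) on ω = {p ∈ ℍ : r(p) > 0, (t, r(p)) ∈ Ω̃}. Then the complex component f̃(x+iy) = ũ(x,y) + i·ṽ(x,y) is holomorphic on Ω̃ (i.e. ∂f̃/∂x + i·∂f̃/∂y = 0 on Ω̃) if and only if ∂f/∂_l p̄ = −2ṽ(t, r(p))/r(p) at every p ∈ ω. -/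
set_option maxHeartbeats 1000000
set_option maxRecDepth 10000


open Quaternion

noncomputable section

def reC : ℍ[ℝ] →L[ℝ] ℝ := LinearMap.toContinuousLinearMap (QuaternionAlgebra.reₗ (R := ℝ) (-1) 0 (-1))
def imIC : ℍ[ℝ] →L[ℝ] ℝ := LinearMap.toContinuousLinearMap (QuaternionAlgebra.imIₗ (R := ℝ) (-1) 0 (-1))
def imJC : ℍ[ℝ] →L[ℝ] ℝ := LinearMap.toContinuousLinearMap (QuaternionAlgebra.imJₗ (R := ℝ) (-1) 0 (-1))
def imKC : ℍ[ℝ] →L[ℝ] ℝ := LinearMap.toContinuousLinearMap (QuaternionAlgebra.imKₗ (R := ℝ) (-1) 0 (-1))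
@[simp] lemma reC_apply (q : ℍ[ℝ]) : reC q = q.re := rfl
@[simp] lemma imIC_apply (q : ℍ[ℝ]) : imIC q = q.imI := rfl
@[simp] lemma imJC_apply (q : ℍ[ℝ]) : imJC q = q.imJ := rfl
@[simp] lemma imKC_apply (q : ℍ[ℝ]) : imKC q = q.imK := rfl

def coeC : ℝ →L[ℝ] ℍ[ℝ] := ContinuousLinearMap.smulRight (ContinuousLinearMap.id ℝ ℝ) (1 : ℍ[ℝ])
@[simp] lemma coeC_apply (x : ℝ) : coeC x = (x : ℍ[ℝ]) := by
  show x • (1:ℍ[ℝ]) = _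
  ext <;> simp

def imC : ℍ[ℝ] →L[ℝ] ℍ[ℝ] := ContinuousLinearMap.id ℝ ℍ[ℝ] - coeC.comp reC
@[simp] lemma imC_apply (q : ℍ[ℝ]) : imC q = q.im := by
  simp only [imC, ContinuousLinearMap.coe_sub', Pi.sub_apply, ContinuousLinearMap.coe_id',
    id_eq, ContinuousLinearMap.coe_comp', Function.comp_apply, reC_apply, coeC_apply]
  ext <;> simp

lemma norm_im_eq (q : ℍ[ℝ]) : ‖q.im‖ = Real.sqrt (q.imI^2 + q.imJ^2 + q.imK^2) := by
  rw [@norm_eq_sqrt_real_inner, Quaternion.inner_self, Quaternion.normSq_def']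
  simp

@[simp] lemma lq_im (a b c d : ℝ) : Quaternion.im (⟨a, b, c, d⟩ : ℍ[ℝ]) = ⟨0, b, c, d⟩ := rfl
@[simp] lemma lq_smul (r a b c d : ℝ) : HSMul.hSMul (α := ℝ) (β := ℍ[ℝ]) (γ := ℍ[ℝ]) r ⟨a, b, c, d⟩ = ⟨r * a, r * b, r * c, r * d⟩ := rfl
@[simp] lemma lq_mul_re (a b c d : ℝ) (x : ℍ[ℝ]) :
    QuaternionAlgebra.re (HMul.hMul (α := ℍ[ℝ]) (β := ℍ[ℝ]) (γ := ℍ[ℝ]) ⟨a, b, c, d⟩ x) = a * x.re - b * x.imI - c * x.imJ - d * x.imK :=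
  Quaternion.re_mul _ _
@[simp] lemma lq_mul_imI (a b c d : ℝ) (x : ℍ[ℝ]) :
    QuaternionAlgebra.imI (HMul.hMul (α := ℍ[ℝ]) (β := ℍ[ℝ]) (γ := ℍ[ℝ]) ⟨a, b, c, d⟩ x) = a * x.imI + b * x.re + c * x.imK - d * x.imJ :=
  Quaternion.imI_mul _ _
@[simp] lemma lq_mul_imJ (a b c d : ℝ) (x : ℍ[ℝ]) :
    QuaternionAlgebra.imJ (HMul.hMul (α := ℍ[ℝ]) (β := ℍ[ℝ]) (γ := ℍ[ℝ]) ⟨a, b, c, d⟩ x) = a * x.imJ - b * x.imK + c * x.re + d * x.imI :=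
  Quaternion.imJ_mul _ _
@[simp] lemma lq_mul_imK (a b c d : ℝ) (x : ℍ[ℝ]) :
    QuaternionAlgebra.imK (HMul.hMul (α := ℍ[ℝ]) (β := ℍ[ℝ]) (γ := ℍ[ℝ]) ⟨a, b, c, d⟩ x) = a * x.imK + b * x.imJ - c * x.imI + d * x.re :=
  Quaternion.imK_mul _ _
@[simp] lemma rq_mul_re (a b c d : ℝ) (x : ℍ[ℝ]) :
    QuaternionAlgebra.re (HMul.hMul (α := ℍ[ℝ]) (β := ℍ[ℝ]) (γ := ℍ[ℝ]) x ⟨a, b, c, d⟩) = x.re * a - x.imI * b - x.imJ * c - x.imK * d :=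
  Quaternion.re_mul _ _
@[simp] lemma rq_mul_imI (a b c d : ℝ) (x : ℍ[ℝ]) :
    QuaternionAlgebra.imI (HMul.hMul (α := ℍ[ℝ]) (β := ℍ[ℝ]) (γ := ℍ[ℝ]) x ⟨a, b, c, d⟩) = x.re * b + x.imI * a + x.imJ * d - x.imK * c :=
  Quaternion.imI_mul _ _
@[simp] lemma rq_mul_imJ (a b c d : ℝ) (x : ℍ[ℝ]) :
    QuaternionAlgebra.imJ (HMul.hMul (α := ℍ[ℝ]) (β := ℍ[ℝ]) (γ := ℍ[ℝ]) x ⟨a, b, c, d⟩) = x.re * c - x.imI * d + x.imJ * a + x.imK * b :=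
  Quaternion.imJ_mul _ _
@[simp] lemma rq_mul_imK (a b c d : ℝ) (x : ℍ[ℝ]) :
    QuaternionAlgebra.imK (HMul.hMul (α := ℍ[ℝ]) (β := ℍ[ℝ]) (γ := ℍ[ℝ]) x ⟨a, b, c, d⟩) = x.re * d + x.imI * c - x.imJ * b + x.imK * a :=
  Quaternion.imK_mul _ _

@[simp] lemma lq_add_re (a b c d : ℝ) (x : ℍ[ℝ]) :
    QuaternionAlgebra.re (HAdd.hAdd (α := ℍ[ℝ]) (β := ℍ[ℝ]) (γ := ℍ[ℝ]) ⟨a, b, c, d⟩ x) = a + x.re :=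
  rfl
@[simp] lemma lq_add_imI (a b c d : ℝ) (x : ℍ[ℝ]) :
    QuaternionAlgebra.imI (HAdd.hAdd (α := ℍ[ℝ]) (β := ℍ[ℝ]) (γ := ℍ[ℝ]) ⟨a, b, c, d⟩ x) = b + x.imI :=
  rfl
@[simp] lemma lq_add_imJ (a b c d : ℝ) (x : ℍ[ℝ]) :
    QuaternionAlgebra.imJ (HAdd.hAdd (α := ℍ[ℝ]) (β := ℍ[ℝ]) (γ := ℍ[ℝ]) ⟨a, b, c, d⟩ x) = c + x.imJ :=
  rfl
@[simp] lemma lq_add_imK (a b c d : ℝ) (x : ℍ[ℝ]) :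
    QuaternionAlgebra.imK (HAdd.hAdd (α := ℍ[ℝ]) (β := ℍ[ℝ]) (γ := ℍ[ℝ]) ⟨a, b, c, d⟩ x) = d + x.imK :=
  rfl

variable {p : ℍ[ℝ]}

lemma hasFDerivAt_sq (p : ℍ[ℝ]) :
    HasFDerivAt (fun q : ℍ[ℝ] => q.imI^2 + q.imJ^2 + q.imK^2)
      ((2*p.imI) • imIC + (2*p.imJ) • imJC + (2*p.imK) • imKC) p := by
  have h1 : HasFDerivAt (fun q : ℍ[ℝ] => q.imI^2) ((2*p.imI) • imIC) p := by
    have := (imIC.hasFDerivAt (x := p)).mul imIC.hasFDerivAt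
    simp only [imIC_apply, smul_add] at this
    convert this using 1 <;> try with_reducible_and_instances rfl
    · funext q; simp only [Pi.mul_apply, imIC_apply]; ring
    · ext w; simp; ring
  have h2 : HasFDerivAt (fun q : ℍ[ℝ] => q.imJ^2) ((2*p.imJ) • imJC) p := by
    have := (imJC.hasFDerivAt (x := p)).mul imJC.hasFDerivAt
    simp only [imJC_apply, smul_add] at this
    convert this using 1 <;> try with_reducible_and_instances rfl
    · funext q; simp only [Pi.mul_apply, imJC_apply]; ring
    · ext w; simp; ring
  have h3 : HasFDerivAt (fun q : ℍ[ℝ] => q.imK^2) ((2*p.imK) • imKC) p := by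
    have := (imKC.hasFDerivAt (x := p)).mul imKC.hasFDerivAt
    simp only [imKC_apply, smul_add] at this
    convert this using 1 <;> try with_reducible_and_instances rfl
    · funext q; simp only [Pi.mul_apply, imKC_apply]; ring
    · ext w; simp; ring
  exact (h1.add h2).add h3

def nD (p : ℍ[ℝ]) : ℍ[ℝ] →L[ℝ] ℝ :=
  (‖p.im‖⁻¹ * p.imI) • imIC + (‖p.im‖⁻¹ * p.imJ) • imJC + (‖p.im‖⁻¹ * p.imK) • imKC

lemma hasFDerivAt_nrm (hp : p.im ≠ 0) :
    HasFDerivAt (fun q : ℍ[ℝ] => ‖q.im‖) (nD p) p := by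
  have hr : 0 < ‖p.im‖ := norm_pos_iff.mpr hp
  have hs : p.imI^2 + p.imJ^2 + p.imK^2 = ‖p.im‖^2 := by
    rw [norm_im_eq]; rw [Real.sq_sqrt]; positivity
  have hsd : HasDerivAt Real.sqrt (1 / (2 * Real.sqrt (p.imI^2 + p.imJ^2 + p.imK^2)))
      (p.imI^2 + p.imJ^2 + p.imK^2) := by
    apply Real.hasDerivAt_sqrt; nlinarith [hr, hs]
  have h := hsd.comp_hasFDerivAt p (hasFDerivAt_sq p)
  have heq : (Real.sqrt ∘ fun q : ℍ[ℝ] => q.imI^2 + q.imJ^2 + q.imK^2) = fun q : ℍ[ℝ] => ‖q.im‖ := by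
    funext q; simp [norm_im_eq]
  rw [heq] at h
  convert h using 1 <;> try with_reducible_and_instances rfl
  have hsq : Real.sqrt (p.imI^2 + p.imJ^2 + p.imK^2) = ‖p.im‖ := (norm_im_eq p).symm
  rw [hsq]
  ext w
  simp [nD]
  field_simp

def cD (p : ℍ[ℝ]) : ℍ[ℝ] →L[ℝ] ℂ := reC.smulRight 1 + (nD p).smulRight Complex.I

lemma hasFDerivAt_cm (hp : p.im ≠ 0) :
    HasFDerivAt (fun q : ℍ[ℝ] => (⟨q.re, ‖q.im‖⟩ : ℂ)) (cD p) p := by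
  have h := (reC.hasFDerivAt (x := p)).smul_const (1 : ℂ)
  have h2 := (hasFDerivAt_nrm hp).smul_const Complex.I
  have h3 := h.add h2
  convert h3 using 1 <;> try with_reducible_and_instances rfl
  funext q
  apply Complex.ext <;> simp
  rfl

def iD (p : ℍ[ℝ]) : ℍ[ℝ] →L[ℝ] ℍ[ℝ] :=
  ‖p.im‖⁻¹ • imC + (-(‖p.im‖^2)⁻¹ • nD p).smulRight p.im

lemma hasFDerivAt_iota (hp : p.im ≠ 0) : HasFDerivAt iota (iD p) p := by
  have hr : 0 < ‖p.im‖ := norm_pos_iff.mpr hp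
  have him : HasFDerivAt (fun q : ℍ[ℝ] => q.im) imC p := by
    have : (fun q : ℍ[ℝ] => q.im) = fun q => imC q := by funext q; simp
    rw [this]; exact imC.hasFDerivAt
  have hninv : HasFDerivAt (fun q : ℍ[ℝ] => ‖q.im‖⁻¹) (-(‖p.im‖^2)⁻¹ • nD p) p := by
    have hd := hasDerivAt_inv hr.ne'
    have := hd.comp_hasFDerivAt p (hasFDerivAt_nrm hp)
    exact this
  exact hninv.smul him

def fD (du dv : ℂ →L[ℝ] ℝ) (v : ℝ) (p : ℍ[ℝ]) : ℍ[ℝ] →L[ℝ] ℍ[ℝ] :=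
  coeC.comp (du.comp (cD p)) +
    ((v : ℍ[ℝ]) • iD p + (coeC.comp (dv.comp (cD p))).smulRight (iota p))

lemma hasFDerivAt_f {ut vt : ℂ → ℝ} {du dv : ℂ →L[ℝ] ℝ}
    (hdu : HasFDerivAt ut du (⟨p.re, ‖p.im‖⟩ : ℂ))
    (hdv : HasFDerivAt vt dv (⟨p.re, ‖p.im‖⟩ : ℂ)) (hp : p.im ≠ 0) :
    HasFDerivAt (fun q : ℍ[ℝ] =>
        ((ut ⟨q.re, ‖q.im‖⟩ : ℝ) : ℍ[ℝ]) + ((vt ⟨q.re, ‖q.im‖⟩ : ℝ) : ℍ[ℝ]) * iota q)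
      (fD du dv (vt ⟨p.re, ‖p.im‖⟩) p) p := by
  have hc := hasFDerivAt_cm hp
  have hU := hdu.comp p hc
  have hUq : HasFDerivAt (fun q : ℍ[ℝ] => ((ut ⟨q.re, ‖q.im‖⟩ : ℝ) : ℍ[ℝ]))
      (coeC.comp (du.comp (cD p))) p := by
    have h := (coeC.hasFDerivAt (x := ut ⟨p.re, ‖p.im‖⟩)).comp p hU
    convert h using 1 <;> try with_reducible_and_instances rfl
    funext q; simp [Function.comp]
  have hV := hdv.comp p hc
  have hVq : HasFDerivAt (fun q : ℍ[ℝ] => ((vt ⟨q.re, ‖q.im‖⟩ : ℝ) : ℍ[ℝ]))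
      (coeC.comp (dv.comp (cD p))) p := by
    have h := (coeC.hasFDerivAt (x := vt ⟨p.re, ‖p.im‖⟩)).comp p hV
    convert h using 1 <;> try with_reducible_and_instances rfl
    funext q; simp [Function.comp]
  have hVi := hVq.mul' (hasFDerivAt_iota hp)
  exact hUq.add hVi


lemma nD_apply (w : ℍ[ℝ]) : nD p w =
    ‖p.im‖⁻¹*p.imI*w.imI + ‖p.im‖⁻¹*p.imJ*w.imJ + ‖p.im‖⁻¹*p.imK*w.imK := by
  simp [nD, mul_assoc]

lemma cD_apply (w : ℍ[ℝ]) : cD p w = (⟨w.re, nD p w⟩ : ℂ) := by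
  apply Complex.ext <;> simp [cD]

lemma iD_apply (w : ℍ[ℝ]) : iD p w =
    ‖p.im‖⁻¹ • w.im + (-(‖p.im‖^2)⁻¹ * nD p w) • p.im := by
  simp [iD, mul_smul]

lemma fD_apply (du dv : ℂ →L[ℝ] ℝ) (v : ℝ) (w : ℍ[ℝ]) : fD du dv v p w =
    ((du (cD p w) : ℝ) : ℍ[ℝ]) + (v : ℍ[ℝ]) * iD p w
      + ((dv (cD p w) : ℝ) : ℍ[ℝ]) * iota p := by
  simp [fD, smul_eq_mul (α := ℍ[ℝ])]
  rw [add_assoc]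

lemma cD_one : cD p 1 = 1 := by
  rw [cD_apply]; apply Complex.ext <;> simp [nD_apply]

lemma cD_qI : cD p qI = (‖p.im‖⁻¹ * p.imI) • Complex.I := by
  rw [cD_apply, nD_apply]; apply Complex.ext <;> simp [qI]

lemma cD_qJ : cD p qJ = (‖p.im‖⁻¹ * p.imJ) • Complex.I := by
  rw [cD_apply, nD_apply]; apply Complex.ext <;> simp [qJ]

lemma cD_qK : cD p qK = (‖p.im‖⁻¹ * p.imK) • Complex.I := by
  rw [cD_apply, nD_apply]; apply Complex.ext <;> simp [qK]

lemma iD_one : iD p 1 = 0 := by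
  rw [iD_apply, nD_apply]
  ext <;> simp

lemma iD_qI : iD p qI = ‖p.im‖⁻¹ • qI + (-(‖p.im‖^2)⁻¹ * (‖p.im‖⁻¹ * p.imI)) • p.im := by
  rw [iD_apply, nD_apply]
  ext <;> simp [qI]

lemma iD_qJ : iD p qJ = ‖p.im‖⁻¹ • qJ + (-(‖p.im‖^2)⁻¹ * (‖p.im‖⁻¹ * p.imJ)) • p.im := by
  rw [iD_apply, nD_apply]
  ext <;> simp [qJ]

lemma iD_qK : iD p qK = ‖p.im‖⁻¹ • qK + (-(‖p.im‖^2)⁻¹ * (‖p.im‖⁻¹ * p.imK)) • p.im := by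
  rw [iD_apply, nD_apply]
  ext <;> simp [qK]

lemma key_s15 {ut vt : ℂ → ℝ} {du dv : ℂ →L[ℝ] ℝ}
    (hdu : HasFDerivAt ut du (⟨p.re, ‖p.im‖⟩ : ℂ))
    (hdv : HasFDerivAt vt dv (⟨p.re, ‖p.im‖⟩ : ℂ)) (hp : p.im ≠ 0) :
    fueterL (fun q : ℍ[ℝ] =>
        ((ut ⟨q.re, ‖q.im‖⟩ : ℝ) : ℍ[ℝ]) + ((vt ⟨q.re, ‖q.im‖⟩ : ℝ) : ℍ[ℝ]) * iota q) p
      = ((du 1 - dv Complex.I : ℝ) : ℍ[ℝ])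
        + ((dv 1 + du Complex.I : ℝ) : ℍ[ℝ]) * iota p
        + ((-2 * vt ⟨p.re, ‖p.im‖⟩ / ‖p.im‖ : ℝ) : ℍ[ℝ]) := by
  have hr : 0 < ‖p.im‖ := norm_pos_iff.mpr hp
  have hs : p.imI ^ 2 + p.imJ ^ 2 + p.imK ^ 2 = ‖p.im‖ ^ 2 := by
    rw [norm_im_eq]; rw [Real.sq_sqrt]; positivity
  have hF := hasFDerivAt_f hdu hdv hp
  unfold fueterL
  rw [hF.fderiv]
  rw [fD_apply, fD_apply, fD_apply, fD_apply, cD_one, cD_qI, cD_qJ, cD_qK,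
    iD_one, iD_qI, iD_qJ, iD_qK]
  simp only [map_smul, smul_eq_mul, mul_zero, add_zero]
  have hiota : iota p = ‖p.im‖⁻¹ • p.im := rfl
  rw [hiota]
  ext <;>
    simp only [qI, qJ, qK, Quaternion.re_add, Quaternion.imI_add, Quaternion.imJ_add,
      Quaternion.imK_add,
      Quaternion.re_mul, Quaternion.imI_mul, Quaternion.imJ_mul, Quaternion.imK_mul,
      Quaternion.re_smul, Quaternion.imI_smul, Quaternion.imJ_smul, Quaternion.imK_smul,
      Quaternion.re_coe, Quaternion.imI_coe, Quaternion.imJ_coe, Quaternion.imK_coe,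
      Quaternion.re_im, Quaternion.imI_im, Quaternion.imJ_im, Quaternion.imK_im,
      smul_eq_mul, mul_zero, zero_mul, mul_one, one_mul, add_zero, zero_add, sub_zero,
      zero_sub, neg_zero, neg_neg, mul_neg, neg_mul, lq_im, lq_smul, lq_mul_re, lq_mul_imI,
      lq_mul_imJ, lq_mul_imK, lq_add_re, lq_add_imI, lq_add_imJ, lq_add_imK]
  all_goals (field_simp; try ring)
  linear_combination (vt (⟨p.re, ‖p.im‖⟩:ℂ) - ‖p.im‖ * dv Complex.I) * hs

lemma hasFDerivAt_tilde {ut vt : ℂ → ℝ} {du dv : ℂ →L[ℝ] ℝ} {z : ℂ}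
    (hdu : HasFDerivAt ut du z) (hdv : HasFDerivAt vt dv z) :
    HasFDerivAt (fun w : ℂ => (ut w : ℂ) + (vt w : ℂ) * Complex.I)
      (du.smulRight 1 + dv.smulRight Complex.I) z := by
  have h := (hdu.smul_const (1 : ℂ)).add (hdv.smul_const Complex.I)
  convert h using 1 <;> try with_reducible_and_instances rfl
  funext w; apply Complex.ext <;> simp

lemma tilde_iff {ut vt : ℂ → ℝ} {du dv : ℂ →L[ℝ] ℝ} {z : ℂ}
    (hdu : HasFDerivAt ut du z) (hdv : HasFDerivAt vt dv z) :
    (fderiv ℝ (fun w : ℂ => (ut w : ℂ) + (vt w : ℂ) * Complex.I) z 1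
      + Complex.I * fderiv ℝ (fun w : ℂ => (ut w : ℂ) + (vt w : ℂ) * Complex.I) z Complex.I = 0)
    ↔ (du 1 - dv Complex.I = 0 ∧ dv 1 + du Complex.I = 0) := by
  rw [(hasFDerivAt_tilde hdu hdv).fderiv]
  simp only [ContinuousLinearMap.add_apply, ContinuousLinearMap.smulRight_apply,
    ContinuousLinearMap.one_apply, Complex.ext_iff, Complex.add_re, Complex.add_im,
    Complex.mul_re, Complex.mul_im, Complex.smul_re, Complex.smul_im, Complex.I_re,
    Complex.I_im, Complex.one_re, Complex.one_im, Complex.zero_re, Complex.zero_im,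
    smul_eq_mul]
  constructor <;> rintro ⟨h1, h2⟩ <;> constructor <;> linarith

/-- the complex component is holomorphic iff the associated CI
quaternionic function satisfies `∂f/∂_l p̄ = -2ṽ/r`. -/
theorem stmt15 (Ω : Set ℂ) (hΩ : IsOpen Ω) (hup : ∀ z ∈ Ω, 0 < z.im)
    (ut vt : ℂ → ℝ) (hut : ContDiffOn ℝ 1 ut Ω) (hvt : ContDiffOn ℝ 1 vt Ω) :
    (∀ z ∈ Ω,
        fderiv ℝ (fun w : ℂ => (ut w : ℂ) + (vt w : ℂ) * Complex.I) z 1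
          + Complex.I *
            fderiv ℝ (fun w : ℂ => (ut w : ℂ) + (vt w : ℂ) * Complex.I) z Complex.I
        = 0) ↔
    (∀ p ∈ {p : ℍ[ℝ] | p.im ≠ 0 ∧ (⟨p.re, ‖p.im‖⟩ : ℂ) ∈ Ω},
        fueterL (fun q : ℍ[ℝ] =>
          ((ut ⟨q.re, ‖q.im‖⟩ : ℝ) : ℍ[ℝ])
            + ((vt ⟨q.re, ‖q.im‖⟩ : ℝ) : ℍ[ℝ]) * iota q) p
        = ((-2 * vt ⟨p.re, ‖p.im‖⟩ / ‖p.im‖ : ℝ) : ℍ[ℝ])) := by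
  have hdiffu : ∀ z ∈ Ω, HasFDerivAt ut (fderiv ℝ ut z) z := fun z hz =>
    ((hut.contDiffAt (hΩ.mem_nhds hz)).differentiableAt one_ne_zero).hasFDerivAt
  have hdiffv : ∀ z ∈ Ω, HasFDerivAt vt (fderiv ℝ vt z) z := fun z hz =>
    ((hvt.contDiffAt (hΩ.mem_nhds hz)).differentiableAt one_ne_zero).hasFDerivAt
  constructor
  · intro h p hp
    obtain ⟨hpim, hzΩ⟩ := hp
    have hdu := hdiffu _ hzΩ
    have hdv := hdiffv _ hzΩ
    rw [key_s15 hdu hdv hpim]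
    obtain ⟨e1, e2⟩ := (tilde_iff hdu hdv).mp (h _ hzΩ)
    rw [e1, e2]
    simp
  · intro h z hz
    have hzim := hup z hz
    set p : ℍ[ℝ] := ⟨z.re, z.im, 0, 0⟩ with hpdef
    have him : p.im ≠ 0 := by
      intro hc
      have h1 := congrArg QuaternionAlgebra.imI hc
      simp [hpdef] at h1
      exact hzim.ne' h1
    have hnrm : ‖p.im‖ = z.im := by
      rw [norm_im_eq]
      simp [hpdef]
      rw [Real.sqrt_sq hzim.le]
    have hzz : (⟨p.re, ‖p.im‖⟩ : ℂ) = z := by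
      apply Complex.ext
      · simp [hpdef]
      · exact hnrm
    have h2 := h p ⟨him, by rw [hzz]; exact hz⟩
    have hdu : HasFDerivAt ut (fderiv ℝ ut z) (⟨p.re, ‖p.im‖⟩ : ℂ) := by
      rw [hzz]; exact hdiffu z hz
    have hdv : HasFDerivAt vt (fderiv ℝ vt z) (⟨p.re, ‖p.im‖⟩ : ℂ) := by
      rw [hzz]; exact hdiffv z hz
    rw [key_s15 hdu hdv him] at h2
    have h3 := add_eq_right.mp h2
    have hiota : iota p = (⟨0, 1, 0, 0⟩ : ℍ[ℝ]) := by
      show ‖p.im‖⁻¹ • p.im = _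
      rw [hnrm]
      ext <;> simp [hpdef] <;> field_simp
    rw [hiota] at h3
    have e1 : fderiv ℝ ut z 1 - fderiv ℝ vt z Complex.I = 0 := by
      have := congrArg QuaternionAlgebra.re h3
      simpa [Quaternion.re_mul, Quaternion.re_coe, Quaternion.imI_coe, Quaternion.imJ_coe,
        Quaternion.imK_coe] using this
    have e2 : fderiv ℝ vt z 1 + fderiv ℝ ut z Complex.I = 0 := by
      have := congrArg QuaternionAlgebra.imI h3
      simpa [Quaternion.imI_mul, Quaternion.re_coe, Quaternion.imI_coe, Quaternion.imJ_coe,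
        Quaternion.imK_coe] using this
    exact (tilde_iff (hdiffu z hz) (hdiffv z hz)).mpr ⟨e1, e2⟩

end
end
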